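/- arXiv:1905.13196 — 5 statements merged into one kernel-verified Lean document; each statement's English description precedes it below -/
import Mathlib

section
/- Let A, B, C be non-collinear points in the Euclidean plane with longest side BC of length a, and let M be the midpoint of BC. If a/2 < d(A, M), then the circumcenter of triangle ABC lies in the interior of the triangle. -/
open Set

local notation "⟪" x ", " y "⟫" => @inner ℝ _ _ x y

set_option maxHeartbeats 1000000 in
/-- If `A, B, C` are non-collinear with longest side `BC` of length `a`, `M` is the midpoint of
`BC`, and `a/2 < dist A M`, then the circumcenter (any point equidistant from `A`, `B`, `C`)
lies in the interior of the triangle, i.e. the interior of the convex hull of `{A, B, C}`. -/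
theorem circumcenter_mem_interior (A B C O : EuclideanSpace ℝ (Fin 2))
    (hcol : ¬ Collinear ℝ ({A, B, C} : Set (EuclideanSpace ℝ (Fin 2))))
    (h1 : dist A C ≤ dist B C) (h2 : dist A B ≤ dist A C)
    (hm : dist B C / 2 < dist A (midpoint ℝ B C))
    (hOB : dist O A = dist O B) (hOC : dist O A = dist O C) :
    O ∈ interior (convexHull ℝ ({A, B, C} : Set (EuclideanSpace ℝ (Fin 2)))) := by
  classical
  set u : EuclideanSpace ℝ (Fin 2) := B - A with hu
  set v : EuclideanSpace ℝ (Fin 2) := C - A with hv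
  set q : EuclideanSpace ℝ (Fin 2) := O - A with hq
  -- pairwise linear independence of u, v
  have hpair : ∀ s t : ℝ, s • u + t • v = 0 → s = 0 ∧ t = 0 := by
    intro s t hst
    by_contra hcon
    apply hcol
    rw [collinear_iff_exists_forall_eq_smul_vadd]
    rcases eq_or_ne t 0 with ht | ht
    · have hs : s ≠ 0 := fun h => hcon ⟨h, ht⟩
      have hu0 : u = 0 := by
        have h0 : s • u = 0 := by simpa [ht] using hst
        rcases smul_eq_zero.mp h0 with h | h
        · exact absurd h hs
        · exact h
      have hBA : B = A := by
        have h1 : B - A = 0 := by rw [← hu]; exact hu0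
        exact sub_eq_zero.mp h1
      refine ⟨A, v, ?_⟩
      intro pt hpt
      rcases hpt with h | h | h
      · exact ⟨0, by rw [h]; simp⟩
      · exact ⟨0, by rw [h, hBA]; simp⟩
      · refine ⟨1, ?_⟩
        rw [h, vadd_eq_add, one_smul, hv]
        module
    · have hvu : v = (-s / t) • u := by
        have h0 : t • v = (-s) • u := by
          linear_combination (norm := module) hst
        have h1 : v = (t⁻¹ * (-s)) • u := by
          rw [← smul_smul, ← h0, smul_smul, inv_mul_cancel₀ ht, one_smul]
        rw [h1, div_eq_inv_mul]
      refine ⟨A, u, ?_⟩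
      intro pt hpt
      rcases hpt with h | h | h
      · exact ⟨0, by rw [h]; simp⟩
      · refine ⟨1, ?_⟩
        rw [h, vadd_eq_add, one_smul, hu]
        module
      · refine ⟨-s / t, ?_⟩
        rw [h, vadd_eq_add, ← hvu, hv]
        module
  set cc : ℝ := ⟪u, u⟫ with hcc
  set bb : ℝ := ⟪v, v⟫ with hbb
  set p : ℝ := ⟪u, v⟫ with hp
  have hvu' : ⟪v, u⟫ = p := by rw [hp, real_inner_comm]
  -- basic positivity
  have hv0 : v ≠ 0 := by
    intro h
    have := hpair 0 1 (by simp [h])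
    exact one_ne_zero this.2
  have hu0 : u ≠ 0 := by
    intro h
    have := hpair 1 0 (by simp [h])
    exact one_ne_zero this.1
  have hbbn : bb = ‖v‖ ^ 2 := by rw [hbb, real_inner_self_eq_norm_sq]
  have hccn : cc = ‖u‖ ^ 2 := by rw [hcc, real_inner_self_eq_norm_sq]
  have hbbpos : 0 < bb := by rw [hbbn]; exact pow_pos (norm_pos_iff.mpr hv0) 2
  have hccpos : 0 < cc := by rw [hccn]; exact pow_pos (norm_pos_iff.mpr hu0) 2
  -- Gram determinant positivity
  have hGpos : 0 < cc * bb - p ^ 2 := by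
    have hw0 : bb • u - p • v ≠ 0 := by
      intro h
      have := hpair bb (-p) (by rw [neg_smul, ← sub_eq_add_neg]; exact h)
      exact hbbpos.ne' this.1
    have hwpos : 0 < ⟪bb • u - p • v, bb • u - p • v⟫ := by
      rw [real_inner_self_eq_norm_sq]
      exact pow_pos (norm_pos_iff.mpr hw0) 2
    have hex : ⟪bb • u - p • v, bb • u - p • v⟫ = bb * (cc * bb - p ^ 2) := by
      simp only [inner_sub_left, inner_sub_right, real_inner_smul_left, real_inner_smul_right,
        ← hcc, ← hbb, ← hp, hvu']
      ring
    rw [hex] at hwpos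
    nlinarith [hwpos, hbbpos]
  have hGne : cc * bb - p ^ 2 ≠ 0 := ne_of_gt hGpos
  -- translate the distance hypotheses
  have hBC : B - C = u - v := by rw [hu, hv]; module
  have hAC : A - C = -v := by rw [hv]; module
  have hAB : A - B = -u := by rw [hu]; module
  have exsub : ⟪u - v, u - v⟫ = cc - 2 * p + bb := by
    simp only [inner_sub_left, inner_sub_right, ← hcc, ← hbb, ← hp, hvu']; ring
  have exadd : ⟪u + v, u + v⟫ = cc + 2 * p + bb := by
    simp only [inner_add_left, inner_add_right, ← hcc, ← hbb, ← hp, hvu']; ring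
  have hdBC : dist B C = ‖u - v‖ := by rw [dist_eq_norm, hBC]
  have hdAC : dist A C = ‖v‖ := by rw [dist_eq_norm, hAC, norm_neg]
  have hdAB : dist A B = ‖u‖ := by rw [dist_eq_norm, hAB, norm_neg]
  have hsubn : ‖u - v‖ ^ 2 = cc - 2 * p + bb := by
    rw [← real_inner_self_eq_norm_sq]; exact exsub
  have haddn : ‖u + v‖ ^ 2 = cc + 2 * p + bb := by
    rw [← real_inner_self_eq_norm_sq]; exact exadd
  have h1' : 2 * p ≤ cc := by
    rw [hdAC, hdBC] at h1
    have := pow_le_pow_left₀ (norm_nonneg v) h1 2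
    rw [hsubn, ← hbbn] at this
    linarith
  have h2' : cc ≤ bb := by
    rw [hdAB, hdAC] at h2
    have := pow_le_pow_left₀ (norm_nonneg u) h2 2
    rw [← hbbn, ← hccn] at this
    linarith
  have hppos : 0 < p := by
    have hmid : A - midpoint ℝ B C = -((2⁻¹ : ℝ) • (u + v)) := by
      rw [midpoint_eq_smul_add, invOf_eq_inv, hu, hv]; module
    have hdm : dist A (midpoint ℝ B C) = ‖u + v‖ / 2 := by
      rw [dist_eq_norm, hmid, norm_neg, norm_smul]
      simp [div_eq_inv_mul]
    rw [hdBC, hdm] at hm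
    have hmm : ‖u - v‖ < ‖u + v‖ := by linarith
    have := pow_lt_pow_left₀ hmm (norm_nonneg _) two_ne_zero
    rw [hsubn, haddn] at this
    linarith
  -- circumcenter equations
  have hOBq : O - B = q - u := by rw [hq, hu]; module
  have hOCq : O - C = q - v := by rw [hq, hv]; module
  have hqu : ⟪q, u⟫ = cc / 2 := by
    rw [dist_eq_norm, dist_eq_norm, hOBq, ← hq] at hOB
    have h := congrArg (fun r : ℝ => r ^ 2) hOB
    rw [norm_sub_sq_real q u, ← hccn] at h
    linarith
  have hqv : ⟪q, v⟫ = bb / 2 := by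
    rw [dist_eq_norm, dist_eq_norm, hOCq, ← hq] at hOC
    have h := congrArg (fun r : ℝ => r ^ 2) hOC
    rw [norm_sub_sq_real q v, ← hbbn] at h
    linarith
  -- barycentric coordinates
  set G : ℝ := cc * bb - p ^ 2 with hG
  set x : ℝ := bb * (cc - p) / (2 * G) with hx
  set y : ℝ := cc * (bb - p) / (2 * G) with hy
  have hG2 : (2 : ℝ) * G ≠ 0 := by positivity
  set d : EuclideanSpace ℝ (Fin 2) := q - (x • u + y • v) with hd
  have hdu : ⟪d, u⟫ = 0 := by
    simp only [hd, inner_sub_left, inner_add_left, real_inner_smul_left, ← hcc, hvu', hqu]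
    rw [hx, hy]
    field_simp
    ring
  have hdv : ⟪d, v⟫ = 0 := by
    simp only [hd, inner_sub_left, inner_add_left, real_inner_smul_left, ← hbb, ← hp, hqv]
    rw [hx, hy]
    field_simp
    ring
  -- span of u, v is everything
  have hLI : LinearIndependent ℝ ![u, v] := LinearIndependent.pair_iff.mpr hpair
  have hspan : Submodule.span ℝ ({u, v} : Set (EuclideanSpace ℝ (Fin 2))) = ⊤ := by
    have := LinearIndependent.span_eq_top_of_card_eq_finrank hLI
      (by simp [finrank_euclideanSpace_fin])
    rwa [Matrix.range_cons, Matrix.range_cons, Matrix.range_empty, Set.union_empty,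
      Set.singleton_union] at this
  have hd0 : d = 0 := by
    have hmem : d ∈ (Submodule.span ℝ ({u, v} : Set (EuclideanSpace ℝ (Fin 2))))ᗮ := by
      rw [Submodule.mem_orthogonal]
      intro w hw
      induction hw using Submodule.span_induction with
      | mem w hw =>
        rcases hw with rfl | rfl
        · rw [real_inner_comm]; exact hdu
        · rw [real_inner_comm]; exact hdv
      | zero => simp
      | add a b _ _ ha hb => rw [inner_add_left, ha, hb]; ring
      | smul r a _ ha => rw [real_inner_smul_left, ha]; ring
    rwa [hspan, Submodule.top_orthogonal_eq_bot, Submodule.mem_bot] at hmem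
  have hOeq : O = x • u + y • v + A := by
    have h0 : q = x • u + y • v := by
      have h1 : q - (x • u + y • v) = 0 := by rw [← hd]; exact hd0
      linear_combination (norm := module) h1
    have h2 : O - A = x • u + y • v := by rw [← hq]; exact h0
    linear_combination (norm := module) h2
  have hxpos : 0 < x := by
    rw [hx]
    apply div_pos _ (by positivity)
    nlinarith [hbbpos, hppos, h1']
  have hypos : 0 < y := by
    rw [hy]
    apply div_pos _ (by positivity)
    nlinarith [hccpos, hppos, h1', h2']
  have hzpos : 0 < 1 - x - y := by
    have hxy : x + y < 1 := by
      rw [hx, hy, ← add_div, div_lt_one (by positivity)]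
      have hbc : 0 < bb + cc - 2 * p := by linarith
      nlinarith [mul_pos hppos hbc]
    linarith
  clear_value x y
  -- the affine basis
  have hAI : AffineIndependent ℝ ![A, B, C] := affineIndependent_iff_not_collinear_set.mpr hcol
  have htop : affineSpan ℝ (range ![A, B, C]) = ⊤ :=
    hAI.affineSpan_eq_top_iff_card_eq_finrank_add_one.mpr (by simp [finrank_euclideanSpace_fin])
  let bas : AffineBasis (Fin 3) ℝ (EuclideanSpace ℝ (Fin 2)) := ⟨![A, B, C], hAI, htop⟩
  have hrange : range ⇑bas = ({A, B, C} : Set (EuclideanSpace ℝ (Fin 2))) := by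
    show range ![A, B, C] = _
    simp_rw [Matrix.range_cons, Matrix.range_empty, Set.singleton_union, LawfulSingleton.insert_empty_eq]
  rw [← hrange, bas.interior_convexHull]
  set w : Fin 3 → ℝ := ![1 - x - y, x, y] with hwdef
  have hwsum : (Finset.univ : Finset (Fin 3)).sum w = 1 := by
    rw [hwdef]
    simp [Fin.sum_univ_three]
    ring
  have hOcomb : O = (Finset.univ : Finset (Fin 3)).affineCombination ℝ ⇑bas w := by
    rw [show ⇑bas = ![A, B, C] from rfl,
      Finset.affineCombination_eq_linear_combination _ _ _ hwsum]
    simp only [Fin.sum_univ_three, hwdef, Matrix.cons_val_zero, Matrix.cons_val_one,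
      Matrix.head_cons, Matrix.cons_val_two, Matrix.tail_cons]
    rw [hOeq, hu, hv]
    module
  intro i
  rw [hOcomb, bas.coord_apply_combination_of_mem (Finset.mem_univ i) hwsum]
  fin_cases i
  · simpa [hwdef] using hzpos
  · simpa [hwdef] using hxpos
  · simpa [hwdef] using hypos
end

section
/- Let A, B, C be non-collinear points in the Euclidean plane and suppose a/2 < d(A,M), where a = d(B,C) is the longest side length and M is the midpoint of BC. If D is a point with max(d(D,A), d(D,B), d(D,C)) ≤ r and D is not the circumcenter of triangle ABC, then there exists r' < r and a point D' with max(d(D',A), d(D',B), d(D',C)) ≤ r'. -/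
open scoped RealInnerProductSpace

set_option maxHeartbeats 2000000

/-- Suppose `A, B, C` are non-collinear with longest side `BC` of length `a`, `M` is the
midpoint of `BC`, and `a/2 < dist A M`.  If `D` is within distance `r` of all of `A`, `B`, `C`
but `D` is not the circumcenter of the triangle `ABC`, then some point `D'` is within distance
`r' < r` of all of `A`, `B`, `C`. -/
theorem shrink_radius_of_not_circumcenter (A B C D : EuclideanSpace ℝ (Fin 2)) (r : ℝ)
    (hcol : ¬ Collinear ℝ ({A, B, C} : Set (EuclideanSpace ℝ (Fin 2))))
    (h1 : dist A C ≤ dist B C) (h2 : dist A B ≤ dist A C)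
    (hm : dist B C / 2 < dist A (midpoint ℝ B C))
    (hD : dist D A ≤ r ∧ dist D B ≤ r ∧ dist D C ≤ r)
    (hnot : ¬ (dist D A = dist D B ∧ dist D A = dist D C)) :
    ∃ r' : ℝ, r' < r ∧ ∃ D' : EuclideanSpace ℝ (Fin 2),
      dist D' A ≤ r' ∧ dist D' B ≤ r' ∧ dist D' C ≤ r' := by
  obtain ⟨hDA, hDB, hDC⟩ := hD
  set u : EuclideanSpace ℝ (Fin 2) := B - A with hu
  set v : EuclideanSpace ℝ (Fin 2) := C - A with hv
  have hAB : A ≠ B := ne₁₂_of_not_collinear hcol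
  have hAC : A ≠ C := ne₁₃_of_not_collinear hcol
  clear_value u v
  have hu0 : u ≠ 0 := hu ▸ sub_ne_zero.mpr hAB.symm
  have hv0 : v ≠ 0 := hv ▸ sub_ne_zero.mpr hAC.symm
  set γ : ℝ := ⟪u, v⟫ with hγdef
  set α : ℝ := ‖u‖ ^ 2 with hαdef
  set β : ℝ := ‖v‖ ^ 2 with hβdef
  clear_value γ α β
  have hαpos : 0 < α := hαdef ▸ pow_pos (norm_pos_iff.mpr hu0) 2
  have hβpos : 0 < β := hβdef ▸ pow_pos (norm_pos_iff.mpr hv0) 2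
  have huu : ⟪u, u⟫ = α := (real_inner_self_eq_norm_sq u).trans hαdef.symm
  have hvv : ⟪v, v⟫ = β := (real_inner_self_eq_norm_sq v).trans hβdef.symm
  have hvu : ⟪v, u⟫ = γ := (real_inner_comm v u).symm.trans hγdef.symm
  -- non-collinearity gives strict Cauchy–Schwarz
  have hvc : ∀ c : ℝ, v ≠ c • u := by
    intro c hc
    apply hcol
    refine (collinear_iff_of_mem (Set.mem_insert A _)).2 ⟨u, ?_⟩
    intro p hp
    simp only [Set.mem_insert_iff, Set.mem_singleton_iff] at hp
    rcases hp with rfl | rfl | rfl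
    · exact ⟨0, by simp⟩
    · exact ⟨1, by rw [one_smul, vadd_eq_add, hu]; abel⟩
    · refine ⟨c, ?_⟩
      rw [vadd_eq_add, ← hc, hv]; abel
  have key : ∀ c d : ℝ, c ≠ 0 → c • v = d • u → False := by
    intro c d hc h
    apply hvc (c⁻¹ * d)
    rw [mul_smul, ← h, smul_smul, inv_mul_cancel₀ hc, one_smul]
  have hne1 : ‖v‖ • u ≠ ‖u‖ • v := by
    intro h
    exact key ‖u‖ ‖v‖ (norm_ne_zero_iff.mpr hu0) h.symm
  have hne2 : ‖v‖ • (-u) ≠ ‖-u‖ • v := by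
    intro h
    rw [norm_neg, smul_neg] at h
    have hflip : ‖u‖ • v = (-‖v‖) • u := by rw [neg_smul]; exact h.symm
    exact key ‖u‖ (-‖v‖) (norm_ne_zero_iff.mpr hu0) hflip
  have hcs1 : γ < ‖u‖ * ‖v‖ := hγdef ▸ inner_lt_norm_mul_iff_real.2 hne1
  have hcs2 : ⟪-u, v⟫ < ‖-u‖ * ‖v‖ := inner_lt_norm_mul_iff_real.2 hne2
  have hcs2' : -γ < ‖u‖ * ‖v‖ := by rw [inner_neg_left, norm_neg, ← hγdef] at hcs2; exact hcs2
  have hcs : γ ^ 2 < α * β := by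
    have hmm : (‖u‖ * ‖v‖) ^ 2 = α * β := by rw [hαdef, hβdef]; ring
    have h := sq_lt_sq' (by linarith [hcs2']) hcs1
    rwa [hmm] at h
  -- translate hypotheses
  have hAsubC : A - C = -v := by rw [hv]; abel
  have hAsubB : A - B = -u := by rw [hu]; abel
  have hBsubC : B - C = u - v := by rw [hu, hv]; abel
  have hdAC : dist A C = ‖v‖ := by rw [dist_eq_norm, hAsubC, norm_neg]
  have hdAB : dist A B = ‖u‖ := by rw [dist_eq_norm, hAsubB, norm_neg]
  have hdBC : dist B C = ‖u - v‖ := by rw [dist_eq_norm, hBsubC]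
  have hexp1 : ‖u - v‖ ^ 2 = α - 2 * γ + β := by
    rw [norm_sub_sq_real, ← hαdef, ← hβdef, ← hγdef]
  have hexp2 : ‖u + v‖ ^ 2 = α + 2 * γ + β := by
    rw [norm_add_sq_real, ← hαdef, ← hβdef, ← hγdef]
  have hγα : 2 * γ ≤ α := by
    have h1' : β ≤ ‖u - v‖ ^ 2 := by
      rw [hβdef, ← hdAC, ← hdBC]
      exact pow_le_pow_left₀ dist_nonneg h1 2
    rw [hexp1] at h1'
    linarith
  have hαβ : α ≤ β := by
    rw [hαdef, hβdef, ← hdAB, ← hdAC]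
    exact pow_le_pow_left₀ dist_nonneg h2 2
  have hγpos : 0 < γ := by
    have hMv : A - midpoint ℝ B C = -((2:ℝ)⁻¹ • (u + v)) := by
      rw [midpoint_eq_smul_add, invOf_eq_inv, hu, hv]
      module
    have hdAM : dist A (midpoint ℝ B C) = 2⁻¹ * ‖u + v‖ := by
      rw [dist_eq_norm, hMv, norm_neg, norm_smul]
      norm_num
    have hlt : ‖u - v‖ < ‖u + v‖ := by
      rw [hdBC] at hm
      rw [hdAM] at hm
      linarith
    have hsq : ‖u - v‖ ^ 2 < ‖u + v‖ ^ 2 := by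
      have h2 := mul_self_lt_mul_self (norm_nonneg _) hlt
      calc ‖u - v‖ ^ 2 = ‖u - v‖ * ‖u - v‖ := by ring
        _ < ‖u + v‖ * ‖u + v‖ := h2
        _ = ‖u + v‖ ^ 2 := by ring
    rw [hexp1, hexp2] at hsq
    linarith
  have ha2pos : 0 < α + β - 2 * γ := by linarith
  -- circumcenter
  set g : ℝ := α * β - γ ^ 2 with hgdef
  have hg : 0 < g := by rw [hgdef]; linarith [hcs]
  set s : ℝ := β * (α - γ) with hsdef
  set t : ℝ := α * (β - γ) with htdef
  set k : ℝ := (2 * g)⁻¹ with hkdef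
  clear_value g s t k
  have hk0 : 0 < k := by rw [hkdef]; exact inv_pos.2 (by linarith)
  have hspos : 0 < s := by
    rw [hsdef]
    have hag : 0 < α - γ := by linarith
    exact mul_pos hβpos hag
  have htpos : 0 < t := by
    rw [htdef]
    have hbg : 0 < β - γ := by linarith
    exact mul_pos hαpos hbg
  set q : EuclideanSpace ℝ (Fin 2) := k • (s • u + t • v) with hqdef
  set Q : EuclideanSpace ℝ (Fin 2) := A + q with hQdef
  clear_value q Q
  have hqu : ⟪q, u⟫ = α / 2 := by
    rw [hqdef]
    simp only [inner_add_left, real_inner_smul_left, huu, hvu]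
    rw [hkdef, hsdef, htdef, hgdef]
    have hgne : α * β - γ ^ 2 ≠ 0 := hgdef ▸ hg.ne'
    field_simp
    ring
  have hqv : ⟪q, v⟫ = β / 2 := by
    rw [hqdef]
    simp only [inner_add_left, real_inner_smul_left, hvv, ← hγdef]
    rw [hkdef, hsdef, htdef, hgdef]
    have hgne : α * β - γ ^ 2 ≠ 0 := hgdef ▸ hg.ne'
    field_simp
    ring
  set R : ℝ := dist Q A with hRdef
  have hQA : Q - A = q := by rw [hQdef]; abel
  have hRq : R = ‖q‖ := by rw [hRdef, dist_eq_norm, hQA]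
  have hQB : Q - B = q - u := by rw [hQdef, hu]; abel
  have hQC : Q - C = q - v := by rw [hQdef, hv]; abel
  have hRB : dist Q B = R := by
    have hsq : dist Q B ^ 2 = R ^ 2 := by
      rw [dist_eq_norm, hQB, hRq, norm_sub_sq_real, hqu]
      rw [← hαdef]
      ring
    exact (pow_left_inj₀ dist_nonneg (hRdef ▸ dist_nonneg) two_ne_zero).1 hsq
  have hRC : dist Q C = R := by
    have hsq : dist Q C ^ 2 = R ^ 2 := by
      rw [dist_eq_norm, hQC, hRq, norm_sub_sq_real, hqv]
      rw [← hβdef]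
      ring
    exact (pow_left_inj₀ dist_nonneg (hRdef ▸ dist_nonneg) two_ne_zero).1 hsq
  have hDQ : D ≠ Q := by
    intro h
    apply hnot
    constructor
    · rw [h, hRB]
    · rw [h, hRC]
  set p : EuclideanSpace ℝ (Fin 2) := D - Q with hpdef
  clear_value p
  have hp0 : p ≠ 0 := hpdef ▸ sub_ne_zero.mpr hDQ
  have hpn : 0 < ‖p‖ := norm_pos_iff.mpr hp0
  set X : ℝ := ⟪u, p⟫ with hXdef
  set Y : ℝ := ⟪v, p⟫ with hYdef
  clear_value X Y
  have hZ : ⟪q, p⟫ = k * (s * X + t * Y) := by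
    rw [hqdef]
    simp only [inner_add_left, real_inner_smul_left]
    rw [← hXdef, ← hYdef]
  have hAQ : A - Q = -q := by rw [hQdef]; abel
  have hBQ : B - Q = u - q := by rw [hQdef, hu]; abel
  have hCQ : C - Q = v - q := by rw [hQdef, hv]; abel
  have hiA : ⟪A - Q, p⟫ = -(k * (s * X + t * Y)) := by
    rw [hAQ, inner_neg_left, hZ]
  have hiB : ⟪B - Q, p⟫ = X - k * (s * X + t * Y) := by
    rw [hBQ, inner_sub_left, hZ, ← hXdef]
  have hiC : ⟪C - Q, p⟫ = Y - k * (s * X + t * Y) := by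
    rw [hCQ, inner_sub_left, hZ, ← hYdef]
  have hwsum : k * s + k * t < 1 := by
    have h2g : s + t < 2 * g := by
      rw [hsdef, htdef, hgdef]
      linarith [mul_pos hγpos ha2pos]
    have : k * (s + t) < k * (2 * g) := mul_lt_mul_of_pos_left h2g hk0
    have hk2g : k * (2 * g) = 1 := by
      rw [hkdef]
      field_simp
    linarith [this, hk2g.le, hk2g.ge]
  have hvert : ⟪A - Q, p⟫ ≤ 0 ∨ ⟪B - Q, p⟫ ≤ 0 ∨ ⟪C - Q, p⟫ ≤ 0 := by
    by_contra h
    push_neg at h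
    obtain ⟨ha, hb, hc⟩ := h
    rw [hiA] at ha
    rw [hiB] at hb
    rw [hiC] at hc
    have hwA : 0 < 1 - k * s - k * t := by linarith
    have hwB : 0 < k * s := mul_pos hk0 hspos
    have hwC : 0 < k * t := mul_pos hk0 htpos
    linarith [mul_pos hwA ha, mul_pos hwB hb, mul_pos hwC hc]
  have hr0 : 0 ≤ r := le_trans dist_nonneg hDA
  have main : ∀ V : EuclideanSpace ℝ (Fin 2),
      dist Q V = R → dist D V ≤ r → ⟪V - Q, p⟫ ≤ 0 → R < r := by
    intro V hQV hDV hiV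
    have hDVQ : D - V = p - (V - Q) := by rw [hpdef]; abel
    have hVQ : ‖V - Q‖ = R := by rw [← dist_eq_norm, dist_comm, hQV]
    have hDV2 : dist D V ^ 2 = ‖p‖ ^ 2 - 2 * ⟪p, V - Q⟫ + R ^ 2 := by
      rw [dist_eq_norm, hDVQ, norm_sub_sq_real, hVQ]
    have hip : ⟪p, V - Q⟫ ≤ 0 := by rw [real_inner_comm]; exact hiV
    have hR0 : 0 ≤ R := hRdef ▸ dist_nonneg
    have hDVr : dist D V ^ 2 ≤ r ^ 2 := pow_le_pow_left₀ dist_nonneg hDV 2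
    have hps : 0 < ‖p‖ ^ 2 := pow_pos hpn 2
    have hRr2 : R ^ 2 < r ^ 2 := by linarith
    exact lt_of_pow_lt_pow_left₀ 2 hr0 hRr2
  have hRr : R < r := by
    rcases hvert with hV | hV | hV
    · exact main A hRdef.symm hDA hV
    · exact main B hRB hDB hV
    · exact main C hRC hDC hV
  exact ⟨R, hRr, Q, le_of_eq hRdef.symm, le_of_eq hRB, le_of_eq hRC⟩
end

section
/- Let A, B, C be non-collinear points in the Euclidean plane with longest side of length a. If the 'death' value d(T) = min{ r : B_r(A) ∩ B_r(B) ∩ B_r(C) ≠ ∅ } is strictly greater than a/2, then d(T) equals the circumradius of triangle ABC. -/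
set_option maxHeartbeats 1000000 in
open RealInnerProductSpace in
/-- For non-collinear `A, B, C` in the Euclidean plane with longest side `BC` of length `a`,
if the death value `d(T) = min { r : B_r(A) ∩ B_r(B) ∩ B_r(C) ≠ ∅ }` (closed balls) is strictly
greater than `a/2`, then `d(T)` equals the circumradius, the common distance from the
circumcenter `O` to the vertices. -/
theorem death_eq_circumradius (A B C O : EuclideanSpace ℝ (Fin 2))
    (hcol : ¬ Collinear ℝ ({A, B, C} : Set (EuclideanSpace ℝ (Fin 2))))
    (h1 : dist A C ≤ dist B C) (h2 : dist A B ≤ dist A C)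
    (hOB : dist O A = dist O B) (hOC : dist O A = dist O C)
    (hgt : dist B C / 2 <
      sInf {r : ℝ | ∃ x : EuclideanSpace ℝ (Fin 2),
        dist x A ≤ r ∧ dist x B ≤ r ∧ dist x C ≤ r}) :
    sInf {r : ℝ | ∃ x : EuclideanSpace ℝ (Fin 2),
        dist x A ≤ r ∧ dist x B ≤ r ∧ dist x C ≤ r} = dist O A := by
  set S : Set ℝ := {r : ℝ | ∃ x : EuclideanSpace ℝ (Fin 2),
        dist x A ≤ r ∧ dist x B ≤ r ∧ dist x C ≤ r} with hSdef
  have hSbdd : BddBelow S := ⟨0, by rintro r ⟨x, hx, -, -⟩; exact le_trans dist_nonneg hx⟩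
  have hOmem : dist O A ∈ S := ⟨O, le_rfl, hOB.ge, hOC.ge⟩
  have hSne : S.Nonempty := ⟨_, hOmem⟩
  have hle : sInf S ≤ dist O A := csInf_le hSbdd hOmem
  -- distinctness of the vertices
  have hAB : A ≠ B := by rintro rfl; exact hcol (by simpa using collinear_pair ℝ A C)
  have hAC : A ≠ C := by
    rintro rfl
    exact hcol (by simpa [Set.insert_comm, Set.pair_comm] using collinear_pair ℝ A B)
  have hBC : B ≠ C := by rintro rfl; exact hcol (by simpa using collinear_pair ℝ A B)
  -- side vectors
  set u : EuclideanSpace ℝ (Fin 2) := B - A with hu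
  set v : EuclideanSpace ℝ (Fin 2) := C - A with hv
  have huv : u - v = B - C := by rw [hu, hv]; abel
  have ha : dist B C = ‖u - v‖ := by rw [huv, dist_eq_norm]
  have hb : dist A C = ‖v‖ := by rw [hv, dist_eq_norm, norm_sub_rev]
  have hc : dist A B = ‖u‖ := by rw [hu, dist_eq_norm, norm_sub_rev]
  have hu0 : 0 < ‖u‖ := by rw [hu]; simpa [norm_pos_iff, sub_eq_zero] using hAB.symm
  have huv0 : 0 < ‖u - v‖ := by rw [huv]; simpa [norm_pos_iff, sub_eq_zero] using hBC
  have ha2 : ‖u - v‖^2 = ‖u‖^2 - 2 * ⟪u, v⟫ + ‖v‖^2 := norm_sub_sq_real u v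
  -- the midpoint of BC
  set M : EuclideanSpace ℝ (Fin 2) := (2⁻¹ : ℝ) • (B + C) with hM
  have hMB : dist M B = dist B C / 2 := by
    have h : M - B = (2⁻¹ : ℝ) • (C - B) := by rw [hM]; module
    rw [dist_eq_norm, h, norm_smul, dist_eq_norm, norm_sub_rev]
    simp; ring
  have hMC : dist M C = dist B C / 2 := by
    have h : M - C = (2⁻¹ : ℝ) • (B - C) := by rw [hM]; module
    rw [dist_eq_norm, h, norm_smul, dist_eq_norm]
    simp; ring
  have hMA : dist M A = ‖u + v‖ / 2 := by
    have h : M - A = (2⁻¹ : ℝ) • (u + v) := by rw [hM, hu, hv]; module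
    rw [dist_eq_norm, h, norm_smul]; simp; ring
  -- the midpoint is not a valid center, hence the angle at A is acute
  have hMAgt : dist B C / 2 < dist M A := by
    by_contra h
    push_neg at h
    exact absurd (csInf_le hSbdd ⟨M, h, hMB.le, hMC.le⟩) (not_le.mpr hgt)
  have hE0 : 0 < ⟪u, v⟫ := by
    rw [hMA, ha] at hMAgt
    have h2' : ‖u - v‖ < ‖u + v‖ := by linarith
    have hsq : ‖u - v‖^2 < ‖u + v‖^2 :=
      pow_lt_pow_left₀ h2' (norm_nonneg _) (by norm_num)
    have hadd : ‖u + v‖^2 = ‖u‖^2 + 2 * ⟪u, v⟫ + ‖v‖^2 := norm_add_sq_real u v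
    linarith
  -- the other two angles are acute since BC is the longest side
  have hba : ‖v‖ ≤ ‖u - v‖ := by rw [← hb, ← ha]; exact h1
  have hcb : ‖u‖ ≤ ‖v‖ := by rw [← hc, ← hb]; exact h2
  have hsq1 : ‖v‖^2 ≤ ‖u - v‖^2 := pow_le_pow_left₀ (norm_nonneg v) hba 2
  have hsq2 : ‖u‖^2 ≤ ‖u - v‖^2 := pow_le_pow_left₀ (norm_nonneg u) (hcb.trans hba) 2
  have hBu : 0 < ‖u‖^2 - ⟪u, v⟫ := by
    have := pow_pos hu0 2
    linarith
  have hCv : 0 < ‖v‖^2 - ⟪u, v⟫ := by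
    have := pow_pos (lt_of_lt_of_le hu0 hcb) 2
    linarith
  -- linear independence of the side vectors
  have hindep : LinearIndependent ℝ ![u, v] := by
    rw [linearIndependent_fin2]
    constructor
    · simp only [Matrix.cons_val_one, Matrix.head_cons, Matrix.cons_val_zero]
      rw [hv, sub_ne_zero]
      rintro rfl
      exact hcol (by simpa [Set.insert_comm, Set.pair_comm] using collinear_pair ℝ C B)
    · intro a hav
      simp only [Matrix.cons_val_one, Matrix.head_cons, Matrix.cons_val_zero] at hav
      apply hcol
      rw [collinear_iff_of_mem (Set.mem_insert A _)]
      refine ⟨v, ?_⟩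
      rintro p (rfl | rfl | rfl)
      · exact ⟨0, by simp⟩
      · exact ⟨a, by rw [hav, hu]; simp⟩
      · exact ⟨1, by rw [hv]; simp⟩
  have hne : ∀ a : ℝ, a • v ≠ u := by
    have h := (linearIndependent_fin2.mp hindep).2
    simpa using h
  have hv0 : v ≠ 0 := by
    have h := (linearIndependent_fin2.mp hindep).1
    simpa using h
  have hspan : Submodule.span ℝ ({u, v} : Set (EuclideanSpace ℝ (Fin 2))) = ⊤ := by
    have h := hindep.span_eq_top_of_card_eq_finrank (by simp)
    rw [Set.pair_comm]; simpa using h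
  -- the circumcenter vector
  set w : EuclideanSpace ℝ (Fin 2) := O - A with hw
  have hwu : ⟪w, u⟫ = ‖u‖^2 / 2 := by
    have e1 : w - u = O - B := by rw [hw, hu]; abel
    have e2 : ‖w‖ = ‖w - u‖ := by
      rw [e1, hw, ← dist_eq_norm, ← dist_eq_norm]; exact hOB
    have e3 : ‖w - u‖^2 = ‖w‖^2 - 2 * ⟪w, u⟫ + ‖u‖^2 := norm_sub_sq_real w u
    have e4 : ‖w‖^2 = ‖w - u‖^2 := by rw [e2]
    linarith
  have hwv : ⟪w, v⟫ = ‖v‖^2 / 2 := by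
    have e1 : w - v = O - C := by rw [hw, hv]; abel
    have e2 : ‖w‖ = ‖w - v‖ := by
      rw [e1, hw, ← dist_eq_norm, ← dist_eq_norm]; exact hOC
    have e3 : ‖w - v‖^2 = ‖w‖^2 - 2 * ⟪w, v⟫ + ‖v‖^2 := norm_sub_sq_real w v
    have e4 : ‖w‖^2 = ‖w - v‖^2 := by rw [e2]
    linarith
  -- scalar abbreviations
  set p : ℝ := ‖u‖^2 with hp
  set q : ℝ := ‖v‖^2 with hq'
  set E : ℝ := ⟪u, v⟫ with hE
  have huu : ⟪u, u⟫ = p := by rw [real_inner_self_eq_norm_sq, hp]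
  have hvv : ⟪v, v⟫ = q := by rw [real_inner_self_eq_norm_sq, hq']
  have hvu : ⟪v, u⟫ = E := by rw [real_inner_comm, hE]
  have hq : 0 < q := by rw [hq']; exact pow_pos (norm_pos_iff.mpr hv0) 2
  have hp0 : 0 < p := by rw [hp]; exact pow_pos hu0 2
  have haa : 0 < ‖u - v‖ ^ 2 := pow_pos huv0 2
  clear_value p q E
  -- strict Cauchy–Schwarz
  have hG : 0 < p * q - E^2 := by
    have h0 : u - (E/q) • v ≠ 0 := by
      rw [sub_ne_zero]; exact fun h => hne (E/q) h.symm
    have hh : 0 < ‖u - (E/q) • v‖^2 := pow_pos (norm_pos_iff.mpr h0) 2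
    have hexp : ‖u - (E/q) • v‖^2 = p - 2*(E/q)*E + (E/q)^2 * q := by
      rw [norm_sub_sq_real, real_inner_smul_right, norm_smul, mul_pow, Real.norm_eq_abs,
        sq_abs, ← hE, ← hp, ← hq']
      ring
    rw [hexp] at hh
    have key : q * (p - 2*(E/q)*E + (E/q)^2*q) = p*q - E^2 := by
      field_simp; ring
    linarith [key, mul_pos hq hh]
  have hGne : p * q - E^2 ≠ 0 := ne_of_gt hG
  -- barycentric coordinates of the circumcenter
  set s : ℝ := q * (p - E) / (2 * (p * q - E^2)) with hs
  set t : ℝ := p * (q - E) / (2 * (p * q - E^2)) with ht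
  have hs0 : 0 < s := by
    rw [hs]; exact div_pos (mul_pos hq hBu) (by positivity)
  have ht0 : 0 < t := by
    rw [ht]; exact div_pos (mul_pos hp0 hCv) (by positivity)
  have hst : s + t < 1 := by
    rw [hs, ht, ← add_div, div_lt_one (by positivity)]
    have k : E * ‖u - v‖^2 = E*p - 2*E^2 + E*q := by rw [ha2]; ring
    linarith [k, mul_pos hE0 haa]
  set z : EuclideanSpace ℝ (Fin 2) := w - (s • u + t • v) with hz
  have hzu : ⟪z, u⟫ = 0 := by
    rw [hz, inner_sub_left, inner_add_left, real_inner_smul_left, real_inner_smul_left,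
      hwu, huu, hvu, hs, ht]
    field_simp
    ring
  have hzv : ⟪z, v⟫ = 0 := by
    rw [hz, inner_sub_left, inner_add_left, real_inner_smul_left, real_inner_smul_left,
      hwv, hvv, ← hE, hs, ht]
    have hGne' : q * p - E ^ 2 ≠ 0 := by rw [mul_comm]; exact hGne
    field_simp
    ring
  have hz0 : z = 0 := by
    have hzmem : z ∈ Submodule.span ℝ ({u, v} : Set (EuclideanSpace ℝ (Fin 2))) := by
      rw [hspan]; trivial
    obtain ⟨c, d, hcd⟩ := Submodule.mem_span_pair.mp hzmem
    have hzz : ⟪z, z⟫ = 0 := by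
      calc ⟪z, z⟫ = ⟪z, c • u + d • v⟫ := by rw [hcd]
        _ = c * ⟪z, u⟫ + d * ⟪z, v⟫ := by
            rw [inner_add_right, real_inner_smul_right, real_inner_smul_right]
        _ = 0 := by rw [hzu, hzv]; ring
    exact inner_self_eq_zero.mp hzz
  have hwst : O - A = s • (B - A) + t • (C - A) := by
    have h := sub_eq_zero.mp hz0
    rw [hw, hu, hv] at h
    exact h
  -- lower bound for the death value
  have hge : dist O A ≤ sInf S := by
    apply le_csInf hSne
    rintro r ⟨x, hxA, hxB, hxC⟩
    set y : EuclideanSpace ℝ (Fin 2) := x - O with hy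
    have hcomb : (1 - s - t) • (O - A) + s • (O - B) + t • (O - C)
        = (O - A) - (s • (B - A) + t • (C - A)) := by module
    have hcomb0 : (1 - s - t) • (O - A) + s • (O - B) + t • (O - C) = 0 := by
      rw [hcomb, ← hwst, sub_self]
    have hsum : (1-s-t) * ⟪y, O-A⟫ + s * ⟪y, O-B⟫ + t * ⟪y, O-C⟫ = 0 := by
      have h2 : ⟪y, (1 - s - t) • (O - A) + s • (O - B) + t • (O - C)⟫ = (0:ℝ) := by
        rw [hcomb0, inner_zero_right]
      rw [inner_add_right, inner_add_right, real_inner_smul_right, real_inner_smul_right,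
        real_inner_smul_right] at h2
      linarith
    have hkey : (0:ℝ) ≤ ⟪y, O - A⟫ ∨ 0 ≤ ⟪y, O - B⟫ ∨ 0 ≤ ⟪y, O - C⟫ := by
      by_contra hcon
      push_neg at hcon
      obtain ⟨hc1, hc2, hc3⟩ := hcon
      have k1 : (1-s-t) * ⟪y, O-A⟫ < 0 := mul_neg_of_pos_of_neg (by linarith) hc1
      have k2 : s * ⟪y, O-B⟫ < 0 := mul_neg_of_pos_of_neg hs0 hc2
      have k3 : t * ⟪y, O-C⟫ < 0 := mul_neg_of_pos_of_neg ht0 hc3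
      linarith
    have hmain : ∀ P : EuclideanSpace ℝ (Fin 2), dist O A = dist O P → dist x P ≤ r →
        0 ≤ ⟪y, O - P⟫ → dist O A ≤ r := by
      intro P hOP hxP hip
      have hxp : x - P = y + (O - P) := by rw [hy]; abel
      have hsq : dist O A ^ 2 ≤ dist x P ^ 2 := by
        rw [dist_eq_norm x P, hxp, norm_add_sq_real, hOP, dist_eq_norm O P]
        linarith [sq_nonneg ‖y‖, hip]
      have hd := (pow_le_pow_iff_left₀ (dist_nonneg (x := O) (y := A))
        (dist_nonneg (x := x) (y := P)) two_ne_zero).mp hsq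
      exact hd.trans hxP
    rcases hkey with h | h | h
    · exact hmain A rfl hxA h
    · exact hmain B hOB hxB h
    · exact hmain C hOC hxC h
  exact le_antisymm hle hge
end

section
/- Fix a > 0. The function f(K) = (2/(a√K)) · arcsin((2/√3) · sin(a√K/2)), defined for K > 0 with a√K < 2π/3, is strictly increasing in K, and f(K) → 2/√3 as K → 0⁺. -/
open Real Filter Set

noncomputable def persF (t : ℝ) : ℝ := Real.arcsin ((2 / Real.sqrt 3) * Real.sin t)

noncomputable def persPhi (t : ℝ) : ℝ :=
  (1 / Real.sqrt (1 - ((2 / Real.sqrt 3) * Real.sin t) ^ 2)) * ((2 / Real.sqrt 3) * Real.cos t)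

lemma pi3_lt : π / 3 < π / 2 := by
  have := Real.pi_pos; linarith

lemma csin_mem {t : ℝ} (ht : t ∈ Ioo 0 (π / 3)) :
    0 < (2 / Real.sqrt 3) * Real.sin t ∧ (2 / Real.sqrt 3) * Real.sin t < 1 := by
  have hπ := Real.pi_pos
  have hc : (0:ℝ) < 2 / Real.sqrt 3 := by positivity
  have hsinpos : 0 < Real.sin t :=
    Real.sin_pos_of_pos_of_lt_pi ht.1 (by linarith [ht.2])
  have hsinlt : Real.sin t < Real.sqrt 3 / 2 := by
    have := Real.strictMonoOn_sin (a := t) (b := π / 3)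
      ⟨by linarith [ht.1], by linarith [ht.2, pi3_lt]⟩
      ⟨by linarith, le_of_lt pi3_lt⟩ ht.2
    rwa [Real.sin_pi_div_three] at this
  constructor
  · positivity
  · have h1 : (2 / Real.sqrt 3) * Real.sin t < (2 / Real.sqrt 3) * (Real.sqrt 3 / 2) :=
      mul_lt_mul_of_pos_left hsinlt hc
    have h2 : (2 / Real.sqrt 3) * (Real.sqrt 3 / 2) = 1 := by
      have : Real.sqrt 3 ≠ 0 := by positivity
      field_simp
    linarith

lemma persF_hasDeriv {t : ℝ} (ht : t ∈ Ioo 0 (π / 3)) : HasDerivAt persF (persPhi t) t := by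
  obtain ⟨h0, h1⟩ := csin_mem ht
  have harcsin := Real.hasDerivAt_arcsin (by linarith : (2 / Real.sqrt 3) * Real.sin t ≠ -1)
    (ne_of_lt h1)
  have hsin : HasDerivAt (fun x => (2 / Real.sqrt 3) * Real.sin x)
      ((2 / Real.sqrt 3) * Real.cos t) t := (Real.hasDerivAt_sin t).const_mul _
  have h := harcsin.comp t hsin
  unfold persF persPhi
  exact h

lemma persPhi_strictMono : StrictMonoOn persPhi (Ioo 0 (π / 3)) := by
  intro s hs t ht hst
  obtain ⟨hs0, hs1⟩ := csin_mem hs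
  obtain ⟨ht0, ht1⟩ := csin_mem ht
  have hπ := Real.pi_pos
  have hcoss : 0 < Real.cos s := Real.cos_pos_of_mem_Ioo ⟨by linarith [hs.1], by linarith [hs.2]⟩
  have hcost : 0 < Real.cos t := Real.cos_pos_of_mem_Ioo ⟨by linarith [ht.1], by linarith [ht.2]⟩
  have hsins : 0 < Real.sin s := Real.sin_pos_of_pos_of_lt_pi hs.1 (by linarith [hs.2])
  have hsinlt : Real.sin s < Real.sin t :=
    Real.strictMonoOn_sin ⟨by linarith [hs.1], by linarith [hs.2]⟩
      ⟨by linarith [ht.1], by linarith [ht.2]⟩ hst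
  set A := Real.sqrt (1 - ((2 / Real.sqrt 3) * Real.sin s) ^ 2) with hA
  set B := Real.sqrt (1 - ((2 / Real.sqrt 3) * Real.sin t) ^ 2) with hB
  have hApos : 0 < A := Real.sqrt_pos.2 (by nlinarith)
  have hBpos : 0 < B := Real.sqrt_pos.2 (by nlinarith)
  have hA2 : A ^ 2 = 1 - ((2 / Real.sqrt 3) * Real.sin s) ^ 2 := Real.sq_sqrt (by nlinarith)
  have hB2 : B ^ 2 = 1 - ((2 / Real.sqrt 3) * Real.sin t) ^ 2 := Real.sq_sqrt (by nlinarith)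
  have hc2 : (2 / Real.sqrt 3) ^ 2 = 4 / 3 := by
    rw [div_pow, Real.sq_sqrt (by norm_num : (0:ℝ) ≤ 3)]; norm_num
  have key : Real.cos s * B < Real.cos t * A := by
    have hsq : (Real.cos s * B) ^ 2 < (Real.cos t * A) ^ 2 := by
      have hcs : Real.cos s ^ 2 = 1 - Real.sin s ^ 2 := Real.cos_sq' s
      have hct : Real.cos t ^ 2 = 1 - Real.sin t ^ 2 := Real.cos_sq' t
      have hsin2 : Real.sin s ^ 2 < Real.sin t ^ 2 := by nlinarith
      have expand : (Real.cos s * B) ^ 2 = Real.cos s ^ 2 * B ^ 2 := by ring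
      have expand2 : (Real.cos t * A) ^ 2 = Real.cos t ^ 2 * A ^ 2 := by ring
      rw [expand, expand2, hA2, hB2, hcs, hct]
      have h34 : ((2 / Real.sqrt 3) * Real.sin s) ^ 2 = 4/3 * Real.sin s ^ 2 := by
        rw [mul_pow, hc2]
      have h35 : ((2 / Real.sqrt 3) * Real.sin t) ^ 2 = 4/3 * Real.sin t ^ 2 := by
        rw [mul_pow, hc2]
      rw [h34, h35]; nlinarith
    exact lt_of_pow_lt_pow_left₀ 2 (by positivity) hsq
  have hφs : persPhi s = (2 / Real.sqrt 3) * (Real.cos s / A) := by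
    unfold persPhi; rw [← hA, mul_comm, mul_one_div, mul_div_assoc]
  have hφt : persPhi t = (2 / Real.sqrt 3) * (Real.cos t / B) := by
    unfold persPhi; rw [← hB, mul_comm, mul_one_div, mul_div_assoc]
  rw [hφs, hφt]
  have hdiv : Real.cos s / A < Real.cos t / B := by
    rw [div_lt_div_iff₀ hApos hBpos]; linarith [key]
  exact mul_lt_mul_of_pos_left hdiv (by positivity)

lemma persF_strictConvex : StrictConvexOn ℝ (Ico 0 (π / 3)) persF := by
  apply StrictMonoOn.strictConvexOn_of_deriv (convex_Ico 0 (π / 3))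
  · exact (Real.continuous_arcsin.comp (continuous_const.mul Real.continuous_sin)).continuousOn
  · rw [interior_Ico]
    intro s hs t ht hst
    rw [(persF_hasDeriv hs).deriv, (persF_hasDeriv ht).deriv]
    exact persPhi_strictMono hs ht hst

lemma persF_zero : persF 0 = 0 := by
  unfold persF; simp

lemma g_strictMono : StrictMonoOn (fun t => persF t / t) (Ioo 0 (π / 3)) := by
  have hπ := Real.pi_pos
  intro s hs t ht hst
  have h0 : (0:ℝ) ∈ Ico 0 (π / 3) := ⟨le_refl 0, by linarith⟩
  have hsec := persF_strictConvex.secant_strict_mono h0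
    (⟨hs.1.le, hs.2⟩ : s ∈ Ico 0 (π / 3)) (⟨ht.1.le, ht.2⟩ : t ∈ Ico 0 (π / 3))
    (ne_of_gt hs.1) (ne_of_gt ht.1) hst
  simpa [persF_zero] using hsec

lemma persF_hasDeriv_zero : HasDerivAt persF (2 / Real.sqrt 3) 0 := by
  have harcsin := Real.hasDerivAt_arcsin (x := (2 / Real.sqrt 3) * Real.sin 0)
    (by simp) (by simp)
  have hsin : HasDerivAt (fun x => (2 / Real.sqrt 3) * Real.sin x)
      ((2 / Real.sqrt 3) * Real.cos 0) 0 := (Real.hasDerivAt_sin 0).const_mul _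
  have h := harcsin.comp 0 hsin
  have heq : 1 / Real.sqrt (1 - ((2 / Real.sqrt 3) * Real.sin 0) ^ 2) *
      ((2 / Real.sqrt 3) * Real.cos 0) = 2 / Real.sqrt 3 := by
    simp
  rw [heq] at h
  exact h

lemma g_tendsto : Tendsto (fun t => persF t / t) (nhdsWithin 0 (Ioi 0)) (nhds (2 / Real.sqrt 3)) := by
  have h := hasDerivAt_iff_tendsto_slope.mp persF_hasDeriv_zero
  have h2 : Tendsto (slope persF 0) (nhdsWithin 0 (Ioi 0)) (nhds (2 / Real.sqrt 3)) :=
    h.mono_left (nhdsWithin_mono 0 (fun x hx => ne_of_gt hx))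
  apply h2.congr
  intro t
  simp [slope_def_field, persF_zero]

/-- For fixed `a > 0`, the function
`f(K) = (2/(a√K)) · arcsin((2/√3) · sin(a√K/2))`, defined for `0 < K < (2π/(3a))²`
(i.e. `a√K < 2π/3`), is strictly increasing, and `f(K) → 2/√3` as `K → 0⁺`. -/
theorem spherical_persistence_strictMono_tendsto (a : ℝ) (ha : 0 < a) :
    StrictMonoOn
      (fun K : ℝ =>
        (2 / (a * Real.sqrt K)) * Real.arcsin ((2 / Real.sqrt 3) * Real.sin (a * Real.sqrt K / 2)))
      (Set.Ioo 0 ((2 * π / (3 * a)) ^ 2)) ∧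
    Tendsto
      (fun K : ℝ =>
        (2 / (a * Real.sqrt K)) * Real.arcsin ((2 / Real.sqrt 3) * Real.sin (a * Real.sqrt K / 2)))
      (nhdsWithin 0 (Set.Ioi 0)) (nhds (2 / Real.sqrt 3)) := by
  have hπ := Real.pi_pos
  set u : ℝ → ℝ := fun K => a * Real.sqrt K / 2 with hu
  have hfeq : ∀ K : ℝ, 0 < K →
      (2 / (a * Real.sqrt K)) * Real.arcsin ((2 / Real.sqrt 3) * Real.sin (a * Real.sqrt K / 2))
        = persF (u K) / u K := by
    intro K hK
    have hsK : 0 < Real.sqrt K := Real.sqrt_pos.2 hK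
    have huK : 0 < u K := by simp only [hu]; positivity
    simp only [hu, persF]
    rw [eq_div_iff (ne_of_gt huK)]
    simp only [hu]
    field_simp
  have humem : ∀ K ∈ Ioo (0:ℝ) ((2 * π / (3 * a)) ^ 2), u K ∈ Ioo 0 (π / 3) := by
    intro K hK
    have hsK : 0 < Real.sqrt K := Real.sqrt_pos.2 hK.1
    constructor
    · simp only [hu]; positivity
    · have hb : 0 < 2 * π / (3 * a) := by positivity
      have : Real.sqrt K < 2 * π / (3 * a) := by
        have := Real.sqrt_lt_sqrt (le_of_lt hK.1) hK.2
        rwa [Real.sqrt_sq (le_of_lt hb)] at this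
      simp only [hu]
      have h4 := mul_lt_mul_of_pos_left this ha
      have h5 : a * (2 * π / (3 * a)) = 2 * π / 3 := by field_simp
      rw [h5] at h4
      linarith
  constructor
  · intro K1 hK1 K2 hK2 hK12
    have h1 := humem K1 hK1
    have h2 := humem K2 hK2
    have hult : u K1 < u K2 := by
      simp only [hu]
      have := Real.sqrt_lt_sqrt (le_of_lt hK1.1) hK12
      nlinarith
    have := g_strictMono h1 h2 hult
    simp only []
    rw [hfeq K1 hK1.1, hfeq K2 hK2.1]
    exact this
  · have hucont : Tendsto u (nhdsWithin 0 (Ioi 0)) (nhdsWithin 0 (Ioi 0)) := by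
      rw [tendsto_nhdsWithin_iff]
      constructor
      · have : Tendsto u (nhds 0) (nhds (u 0)) := by
          apply Continuous.tendsto
          simp only [hu]
          continuity
        have hu0 : u 0 = 0 := by simp [hu]
        rw [hu0] at this
        exact this.mono_left nhdsWithin_le_nhds
      · filter_upwards [self_mem_nhdsWithin] with K hK
        have : 0 < Real.sqrt K := Real.sqrt_pos.2 hK
        simp only [hu, mem_Ioi]; positivity
    have := g_tendsto.comp hucont
    apply this.congr'
    filter_upwards [self_mem_nhdsWithin] with K hK
    exact (hfeq K hK).symm
end

section
/- Fix a > 0. The function g(K) = (2/(a√(−K))) · arcsinh((2/√3) · sinh(a√(−K)/2)), defined for K < 0, is strictly increasing in K, satisfies g(K) < 2/√3 for all K < 0, and g(K) → 2/√3 as K → 0⁻. -/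
open Real Filter Set

noncomputable def cc : ℝ := 2 / Real.sqrt 3
noncomputable def hh (t : ℝ) : ℝ := Real.arsinh (cc * Real.sinh t)
noncomputable def hh' (t : ℝ) : ℝ :=
  cc * Real.cosh t / Real.sqrt (1 + (cc * Real.sinh t) ^ 2)

lemma sqrt3_pos : 0 < Real.sqrt 3 := Real.sqrt_pos.2 (by norm_num)
lemma cc_pos : 0 < cc := div_pos (by norm_num) sqrt3_pos
lemma cc_sq : cc ^ 2 = 4 / 3 := by
  rw [cc, div_pow, Real.sq_sqrt (by norm_num : (3:ℝ) ≥ 0)]; norm_num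

lemma hasDerivAt_hh (t : ℝ) : HasDerivAt hh (hh' t) t := by
  have h2 : HasDerivAt (fun t => cc * Real.sinh t) (cc * Real.cosh t) t :=
    (Real.hasDerivAt_sinh t).const_mul cc
  have : HasDerivAt hh ((Real.sqrt (1 + (cc * Real.sinh t) ^ 2))⁻¹ * (cc * Real.cosh t)) t :=
    (Real.hasDerivAt_arsinh (cc * Real.sinh t)).comp t h2
  convert this using 1
  rw [hh', div_eq_mul_inv, mul_comm]

lemma D_pos (x : ℝ) : 0 < Real.sqrt (1 + x ^ 2) := Real.sqrt_pos.2 (by positivity)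

lemma hh'_pos (t : ℝ) : 0 < hh' t :=
  div_pos (mul_pos cc_pos (Real.cosh_pos (x := t))) (D_pos _)

lemma hh'_sq (t : ℝ) :
    hh' t ^ 2 = cc ^ 2 * Real.cosh t ^ 2 / (1 + (cc * Real.sinh t) ^ 2) := by
  rw [hh', div_pow, mul_pow, Real.sq_sqrt (by positivity)]

lemma hh'_anti : StrictAntiOn hh' (Ici 0) := by
  intro t₁ h₁ t₂ _ hlt
  apply lt_of_pow_lt_pow_left₀ 2 (le_of_lt (hh'_pos t₁))
  rw [hh'_sq, hh'_sq, div_lt_div_iff₀ (by positivity) (by positivity)]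
  have hs : Real.sinh t₁ < Real.sinh t₂ := Real.sinh_lt_sinh.2 hlt
  have hs1 : 0 ≤ Real.sinh t₁ := by
    simpa using Real.sinh_le_sinh.2 h₁
  have hc1 : Real.cosh t₁ ^ 2 = 1 + Real.sinh t₁ ^ 2 := Real.cosh_sq' t₁
  have hc2 : Real.cosh t₂ ^ 2 = 1 + Real.sinh t₂ ^ 2 := Real.cosh_sq' t₂
  rw [hc1, hc2, mul_pow, mul_pow, cc_sq]
  nlinarith [sq_nonneg (Real.sinh t₁ + Real.sinh t₂), mul_pos (lt_of_le_of_lt hs1 hs) (lt_of_le_of_lt hs1 hs)]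

lemma hh'_zero : hh' 0 = cc := by
  simp [hh', Real.sinh_zero, Real.cosh_zero]

lemma hh'_lt_cc {t : ℝ} (ht : 0 < t) : hh' t < cc := by
  have := hh'_anti (self_mem_Ici) (le_of_lt ht) ht
  rwa [hh'_zero] at this

lemma hh_zero : hh 0 = 0 := by simp [hh]

lemma continuous_hh : Continuous hh :=
  Real.continuous_arsinh.comp (continuous_const.mul Real.continuous_sinh)

lemma slope_eq {t : ℝ} (ht : 0 < t) : ∃ ξ ∈ Ioo 0 t, hh t / t = hh' ξ := by
  obtain ⟨ξ, hξ, he⟩ := exists_hasDerivAt_eq_slope hh hh' ht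
    continuous_hh.continuousOn (fun x _ => hasDerivAt_hh x)
  exact ⟨ξ, hξ, by rw [he, hh_zero, sub_zero, sub_zero]⟩

lemma slope_eq' {t₁ t₂ : ℝ} (h : t₁ < t₂) :
    ∃ ξ ∈ Ioo t₁ t₂, hh t₂ - hh t₁ = hh' ξ * (t₂ - t₁) := by
  obtain ⟨ξ, hξ, he⟩ := exists_hasDerivAt_eq_slope hh hh' h
    continuous_hh.continuousOn (fun x _ => hasDerivAt_hh x)
  refine ⟨ξ, hξ, ?_⟩
  rw [he, div_mul_cancel₀ _ (ne_of_gt (by linarith : (0:ℝ) < t₂ - t₁))]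

lemma f_anti {t₁ t₂ : ℝ} (h1 : 0 < t₁) (h2 : t₁ < t₂) : hh t₂ / t₂ < hh t₁ / t₁ := by
  obtain ⟨η, hη, heη⟩ := slope_eq h1
  obtain ⟨ξ, hξ, heξ⟩ := slope_eq' h2
  have hηξ : hh' ξ < hh' η :=
    hh'_anti (le_of_lt hη.1) (le_of_lt (lt_trans h1 hξ.1)) (lt_trans hη.2 hξ.1)
  have ht1 : hh t₁ = hh' η * t₁ := by
    field_simp at heη; linarith [heη]
  have : hh t₂ < hh' η * t₂ := by nlinarith [hξ.1, hξ.2]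
  rw [div_lt_div_iff₀ (lt_trans h1 h2) h1, ht1]
  nlinarith [lt_trans h1 h2]

lemma f_lt_cc {t : ℝ} (ht : 0 < t) : hh t / t < cc := by
  obtain ⟨η, hη, heη⟩ := slope_eq ht
  rw [heη]; exact hh'_lt_cc hη.1

lemma f_gt {t : ℝ} (ht : 0 < t) : hh' t < hh t / t := by
  obtain ⟨η, hη, heη⟩ := slope_eq ht
  rw [heη]
  exact hh'_anti (le_of_lt hη.1) (le_of_lt ht) hη.2

lemma continuous_hh' : Continuous hh' := by
  apply Continuous.div
  · exact continuous_const.mul Real.continuous_cosh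
  · exact (continuous_const.add ((continuous_const.mul Real.continuous_sinh).pow 2)).sqrt
  · exact fun x => ne_of_gt (D_pos _)

lemma f_tendsto : Tendsto (fun t => hh t / t) (nhdsWithin 0 (Ioi 0)) (nhds cc) := by
  apply tendsto_of_tendsto_of_tendsto_of_le_of_le'
    (g := hh') (h := fun _ => cc)
  · have : Tendsto hh' (nhdsWithin 0 (Ioi 0)) (nhds (hh' 0)) :=
      (continuous_hh'.tendsto 0).mono_left nhdsWithin_le_nhds
    rwa [hh'_zero] at this
  · exact tendsto_const_nhds
  · filter_upwards [self_mem_nhdsWithin] with t ht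
    exact le_of_lt (f_gt ht)
  · filter_upwards [self_mem_nhdsWithin] with t ht
    exact le_of_lt (f_lt_cc ht)

/-- For fixed `a > 0`, the function
`g(K) = (2/(a√(−K))) · arcsinh((2/√3) · sinh(a√(−K)/2))`, defined for `K < 0`,
is strictly increasing, satisfies `g(K) < 2/√3` for all `K < 0`, and `g(K) → 2/√3` as
`K → 0⁻`. -/
theorem hyperbolic_persistence_strictMono_lt_tendsto (a : ℝ) (ha : 0 < a) :
    StrictMonoOn
      (fun K : ℝ =>
        (2 / (a * Real.sqrt (-K))) * Real.arsinh ((2 / Real.sqrt 3) * Real.sinh (a * Real.sqrt (-K) / 2)))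
      (Set.Iio 0) ∧
    (∀ K : ℝ, K < 0 →
      (2 / (a * Real.sqrt (-K))) * Real.arsinh ((2 / Real.sqrt 3) * Real.sinh (a * Real.sqrt (-K) / 2))
        < 2 / Real.sqrt 3) ∧
    Tendsto
      (fun K : ℝ =>
        (2 / (a * Real.sqrt (-K))) * Real.arsinh ((2 / Real.sqrt 3) * Real.sinh (a * Real.sqrt (-K) / 2)))
      (nhdsWithin 0 (Set.Iio 0)) (nhds (2 / Real.sqrt 3)) := by
  set u : ℝ → ℝ := fun K => a * Real.sqrt (-K) / 2 with hu
  have hupos : ∀ K : ℝ, K < 0 → 0 < u K := by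
    intro K hK
    have : 0 < Real.sqrt (-K) := Real.sqrt_pos.2 (by linarith)
    positivity
  have key : ∀ K : ℝ, K < 0 →
      (2 / (a * Real.sqrt (-K))) * Real.arsinh ((2 / Real.sqrt 3) * Real.sinh (a * Real.sqrt (-K) / 2))
        = hh (u K) / u K := by
    intro K hK
    have h0 : 0 < Real.sqrt (-K) := Real.sqrt_pos.2 (by linarith)
    rw [hh, cc, hu]
    field_simp
  have huanti : ∀ K₁ K₂ : ℝ, K₁ < K₂ → K₂ < 0 → u K₂ < u K₁ := by
    intro K₁ K₂ h12 h2
    have : Real.sqrt (-K₂) < Real.sqrt (-K₁) :=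
      Real.sqrt_lt_sqrt (by linarith) (by linarith)
    simp only [hu]
    nlinarith
  refine ⟨?_, ?_, ?_⟩
  · intro K₁ hK₁ K₂ hK₂ h12
    simp only [mem_Iio] at hK₁ hK₂
    dsimp only
    rw [key K₁ hK₁, key K₂ hK₂]
    exact f_anti (hupos K₂ hK₂) (huanti K₁ K₂ h12 hK₂)
  · intro K hK
    rw [key K hK]
    have := f_lt_cc (hupos K hK)
    rwa [cc] at this
  · have hucont : Continuous u := by
      apply Continuous.div_const
      exact continuous_const.mul (Real.continuous_sqrt.comp continuous_neg)
    have hu0 : Tendsto u (nhdsWithin 0 (Iio 0)) (nhdsWithin 0 (Ioi 0)) := by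
      rw [tendsto_nhdsWithin_iff]
      constructor
      · have := (hucont.tendsto 0).mono_left (nhdsWithin_le_nhds (s := Iio 0))
        simpa [hu] using this
      · filter_upwards [self_mem_nhdsWithin] with K hK
        exact hupos K hK
    have := (f_tendsto.comp hu0)
    rw [show (2 : ℝ) / Real.sqrt 3 = cc from rfl]
    apply this.congr'
    filter_upwards [self_mem_nhdsWithin] with K hK
    exact (key K hK).symm
end
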